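/- Let A, B, C be real numbers with A > 0, C > 0 and 4AC − B² > 0, and let E be the ellipse {(x,y) ∈ ℝ² : Ax² + Bxy + Cy² = 1}. Then the circumference (arc length of the boundary curve) L of E satisfies L ≤ √(2(A+C)) · vol(E), where vol(E) = 2π/√(4AC − B²) is the area enclosed by E. -/

import Mathlib

open Real Set intervalIntegral

private lemma minLip (t x y : ℝ) : |min t x - min t y| ≤ |x - y| := by
  rw [abs_sub_le_iff]
  constructor <;>
  · rcases le_total t x with h1 | h1 <;> rcases le_total t y with h2 | h2 <;>
      simp only [min_eq_left, min_eq_right, h1, h2] <;>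
      cases' abs_cases (x - y) with h h <;> linarith

private lemma circleExp_sum (n : ℕ) (f : ℕ → ℝ) :
    Circle.exp (∑ i ∈ Finset.range n, f i) = ∏ i ∈ Finset.range n, Circle.exp (f i) := by
  induction n with
  | zero => simp
  | succ n ih => rw [Finset.sum_range_succ, Circle.exp_add, ih, Finset.prod_range_succ]

private lemma circle_lift (z : ℝ → Circle) (hz : Continuous z) :
    ∃ φ : ℝ → ℝ, ContinuousOn φ (Icc 0 1) ∧
      ∀ t ∈ Icc (0:ℝ) 1, Circle.exp (φ t) = z t := by
  obtain ⟨δ, hδ0, hδ⟩ : ∃ δ > 0, ∀ a ∈ Icc (0:ℝ) 1, ∀ b ∈ Icc (0:ℝ) 1,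
      dist a b < δ → dist (z a) (z b) < 1 := by
    have h := (isCompact_Icc (a := (0:ℝ)) (b := 1)).uniformContinuousOn_of_continuous
      hz.continuousOn
    replace h := Metric.uniformContinuousOn_iff.1 h
    obtain ⟨δ, hδ0, h⟩ := h 1 one_pos
    exact ⟨δ, hδ0, fun a ha b hb hd => h a ha b hb hd⟩
  obtain ⟨n0, hn0⟩ := exists_nat_one_div_lt hδ0
  set N : ℕ := n0 + 1 with hNdef
  have hNpos : (0:ℝ) < N := by positivity
  have hNδ : 1 / (N:ℝ) < δ := by
    rw [hNdef]; push_cast; exact hn0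
  have key : ∀ t ∈ Icc (0:ℝ) 1, ∀ k : ℕ,
      (0:ℝ) < ((z (min t ((k+1:ℕ)/N)) / z (min t ((k:ℕ)/N)) : Circle) : ℂ).re := by
    intro t ht k
    set a := min t ((k+1:ℕ)/(N:ℝ)) with ha
    set b := min t ((k:ℕ)/(N:ℝ)) with hb
    have haI : a ∈ Icc (0:ℝ) 1 :=
      ⟨le_min ht.1 (by positivity), (min_le_left _ _).trans ht.2⟩
    have hbI : b ∈ Icc (0:ℝ) 1 :=
      ⟨le_min ht.1 (by positivity), (min_le_left _ _).trans ht.2⟩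
    have hdist : dist a b < δ := by
      rw [Real.dist_eq]
      calc |a - b| ≤ |((k+1:ℕ)/(N:ℝ) - (k:ℕ)/(N:ℝ))| := minLip t _ _
        _ = 1 / N := by
            have he : ((k+1:ℕ):ℝ)/(N:ℝ) - (k:ℕ)/(N:ℝ) = 1 / N := by
              push_cast; field_simp; ring
            rw [he, abs_of_nonneg (by positivity)]
        _ < δ := hNδ
    have hzd : dist (z a) (z b) < 1 := hδ a haI b hbI hdist
    have habs : ‖((z a / z b : Circle) : ℂ)‖ = 1 := Circle.norm_coe _
    have hsub : ‖((z a / z b : Circle) : ℂ) - 1‖ < 1 := by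
      rw [Circle.coe_div, div_sub_one (Circle.coe_ne_zero _), norm_div, Circle.norm_coe, div_one]
      rw [← Complex.dist_eq]
      exact hzd
    set w : ℂ := ((z a / z b : Circle) : ℂ) with hw
    have h1 : w.re ^ 2 + w.im ^ 2 = 1 := by
      have := Complex.sq_norm w
      rw [habs, Complex.normSq_apply] at this
      nlinarith [this]
    have h2 : (w.re - 1) ^ 2 + w.im ^ 2 < 1 := by
      have := Complex.sq_norm (w - 1)
      rw [Complex.normSq_apply, Complex.sub_re, Complex.sub_im, Complex.one_re,
        Complex.one_im] at this
      nlinarith [hsub, norm_nonneg (w - 1)]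
    nlinarith
  refine ⟨fun t => Complex.arg (z 0) + ∑ k ∈ Finset.range N,
      Complex.arg ((z (min t ((k+1:ℕ)/N)) / z (min t ((k:ℕ)/N)) : Circle) : ℂ), ?_, ?_⟩
  · apply ContinuousOn.add continuousOn_const
    apply continuousOn_finset_sum
    intro k _
    intro t ht
    have hc1 : Continuous fun s : ℝ =>
        (z (min s ((k+1:ℕ)/N)) / z (min s ((k:ℕ)/N)) : Circle) :=
      Continuous.div' (hz.comp (continuous_id.min continuous_const))
        (hz.comp (continuous_id.min continuous_const))
    have hc : Continuous fun s : ℝ =>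
        ((z (min s ((k+1:ℕ)/N)) / z (min s ((k:ℕ)/N)) : Circle) : ℂ) :=
      hc1.subtype_val
    show ContinuousWithinAt (Complex.arg ∘ (fun s : ℝ =>
        ((z (min s ((k+1:ℕ)/N)) / z (min s ((k:ℕ)/N)) : Circle) : ℂ))) (Icc 0 1) t
    exact ContinuousAt.comp_continuousWithinAt
      (Complex.continuousAt_arg (Complex.mem_slitPlane_iff.2 (Or.inl (key t ht k))))
      hc.continuousWithinAt
  · intro t ht
    rw [Circle.exp_add, circleExp_sum]
    have hcongr : ∀ k ∈ Finset.range N,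
        Circle.exp (Complex.arg ((z (min t ((k+1:ℕ)/N)) / z (min t ((k:ℕ)/N)) : Circle) : ℂ))
          = z (min t ((k+1:ℕ)/(N:ℝ))) / z (min t ((k:ℕ)/(N:ℝ))) := fun k _ =>
      Circle.exp_arg _
    rw [Finset.prod_congr rfl hcongr,
      Finset.prod_range_div (fun j : ℕ => z (min t ((j:ℕ)/(N:ℝ)))) N]
    rw [Circle.exp_arg]
    have h0 : min t ((0:ℕ)/(N:ℝ)) = 0 := by
      simp [min_eq_right ht.1]
    have hN : min t ((N:ℕ)/(N:ℝ)) = t := by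
      rw [div_self hNpos.ne', min_eq_left ht.2]
    rw [h0, hN, ← mul_div_assoc, mul_comm, mul_div_cancel_right]

private lemma sum_dist_le (F : ℝ → EuclideanSpace ℝ (Fin 2)) (g : ℝ → ℝ)
    (hg : Continuous g)
    (hchord : ∀ a b : ℝ, a ≤ b → dist (F a) (F b) ≤ ∫ θ in a..b, g θ)
    (ψ : ℕ → ℝ) (hψ : Monotone ψ) :
    ∀ n : ℕ, ∑ i ∈ Finset.range n, dist (F (ψ i)) (F (ψ (i+1)))
      ≤ ∫ θ in (ψ 0)..(ψ n), g θ := by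
  intro n
  induction n with
  | zero => simp
  | succ n ih =>
    rw [Finset.sum_range_succ, ← intervalIntegral.integral_add_adjacent_intervals
      (a := ψ 0) (b := ψ n) (c := ψ (n+1)) (hg.intervalIntegrable _ _)
      (hg.intervalIntegrable _ _)]
    exact add_le_add ih (hchord _ _ (hψ (Nat.le_succ n)))

set_option maxHeartbeats 1000000 in
/-- The circumference of an ellipse `Ax² + Bxy + Cy² = 1` (with `A, C > 0` and
`4AC - B² > 0`), i.e. the arc length (total variation over one period) of any
continuous injective parametrization of the boundary, is at most
`√(2(A+C))` times the enclosed area `2π/√(4AC - B²)`. -/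
theorem ellipse_circumference_le
    (A B C : ℝ) (hA : 0 < A) (hC : 0 < C) (hD : 0 < 4 * A * C - B ^ 2)
    (γ : ℝ → EuclideanSpace ℝ (Fin 2))
    (hcont : Continuous γ)
    (hper : ∀ t, γ (t + 1) = γ t)
    (hinj : Set.InjOn γ (Set.Ico (0 : ℝ) 1))
    (himage : Set.range γ =
      {p : EuclideanSpace ℝ (Fin 2) |
        A * (p 0) ^ 2 + B * (p 0) * (p 1) + C * (p 1) ^ 2 = 1}) :
    eVariationOn γ (Set.Icc 0 1)
      ≤ ENNReal.ofReal
          (Real.sqrt (2 * (A + C)) * (2 * π / Real.sqrt (4 * A * C - B ^ 2))) := by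
  have hπ := Real.pi_pos
  have hA4 : (0:ℝ) < 4*A := by linarith
  have hsq2 : (0:ℝ) < (4*A*C - B^2)/(4*A) := div_pos hD hA4
  set sa := Real.sqrt A with hsadef
  set s := Real.sqrt ((4*A*C - B^2)/(4*A)) with hsdef
  have hsa0 : 0 < sa := Real.sqrt_pos.2 hA
  have hs0 : 0 < s := Real.sqrt_pos.2 hsq2
  have hsa2 : sa^2 = A := Real.sq_sqrt hA.le
  have hs2 : s^2 = (4*A*C - B^2)/(4*A) := Real.sq_sqrt hsq2.le
  have hA' : A = sa^2 := hsa2.symm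
  have hC' : C = s^2 + B^2/(4*sa^2) := by
    rw [hs2, hsa2]; field_simp; ring
  -- the ellipse equation
  have hell : ∀ t, A * (γ t 0)^2 + B * (γ t 0) * (γ t 1) + C * (γ t 1)^2 = 1 := by
    intro t
    have h : γ t ∈ Set.range γ := Set.mem_range_self t
    rw [himage] at h
    exact h
  set u : ℝ → ℝ := fun t => sa * γ t 0 + (B/(2*sa)) * γ t 1 with hudef
  set v : ℝ → ℝ := fun t => s * γ t 1 with hvdef
  have huv : ∀ t, (u t)^2 + (v t)^2 = 1 := by
    intro t
    have h := hell t
    rw [hA', hC'] at h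
    rw [hudef, hvdef]
    simp only
    rw [← h]
    field_simp
    try ring
  have hx : Continuous fun t => γ t 0 := (EuclideanSpace.proj (0:Fin 2)).continuous.comp hcont
  have hy : Continuous fun t => γ t 1 := (EuclideanSpace.proj (1:Fin 2)).continuous.comp hcont
  have huc : Continuous u := by rw [hudef]; fun_prop
  have hvc : Continuous v := by rw [hvdef]; fun_prop
  have hmem : ∀ t, (↑(u t) + ↑(v t) * Complex.I : ℂ) ∈ Submonoid.unitSphere ℂ := by
    intro t
    show _ ∈ Metric.sphere (0:ℂ) 1
    rw [mem_sphere_zero_iff_norm, Complex.norm_add_mul_I, huv t, Real.sqrt_one]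
  set z : ℝ → Circle := fun t => ⟨_, hmem t⟩ with hzdef
  have hzc : Continuous z := Continuous.subtype_mk (by fun_prop) _
  obtain ⟨φ, hφc, hφ⟩ := circle_lift z hzc
  have hcos : ∀ t ∈ Set.Icc (0:ℝ) 1, Real.cos (φ t) = u t := by
    intro t ht
    have h := congrArg (fun w : Circle => (w:ℂ).re) (hφ t ht)
    simpa [hzdef, Circle.coe_exp, Complex.exp_ofReal_mul_I_re] using h
  have hsin : ∀ t ∈ Set.Icc (0:ℝ) 1, Real.sin (φ t) = v t := by
    intro t ht
    have h := congrArg (fun w : Circle => (w:ℂ).im) (hφ t ht)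
    simpa [hzdef, Circle.coe_exp, Complex.exp_ofReal_mul_I_im] using h
  -- the standard parametrization
  set e := (PiLp.continuousLinearEquiv 2 ℝ (fun _ : Fin 2 => ℝ)).symm with hedef
  set F : ℝ → EuclideanSpace ℝ (Fin 2) := fun θ =>
    e ![Real.cos θ * (1/sa) - Real.sin θ * (B/(2*A*s)), Real.sin θ * (1/s)] with hFdef
  set Fd : ℝ → EuclideanSpace ℝ (Fin 2) := fun θ =>
    e ![-(Real.sin θ) * (1/sa) - Real.cos θ * (B/(2*A*s)), Real.cos θ * (1/s)] with hFddef
  set g : ℝ → ℝ := fun θ =>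
    Real.sqrt ((Real.sin θ * (1/sa) + Real.cos θ * (B/(2*A*s)))^2 + (Real.cos θ * (1/s))^2)
    with hgdef
  have hgc : Continuous g := by
    rw [hgdef]; fun_prop
  have hgnn : ∀ θ, 0 ≤ g θ := fun θ => Real.sqrt_nonneg _
  have hgper : Function.Periodic g (2*π) := by
    intro θ
    rw [hgdef]
    simp only [Real.sin_add_two_pi, Real.cos_add_two_pi]
  have hFper : ∀ θ, F (θ + 2*π) = F θ := by
    intro θ
    rw [hFdef]
    simp only [Real.sin_add_two_pi, Real.cos_add_two_pi]
  have hγe : ∀ t, γ t = e ![γ t 0, γ t 1] := by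
    intro t
    ext i
    fin_cases i <;> rfl
  have hγF : ∀ t ∈ Set.Icc (0:ℝ) 1, γ t = F (φ t) := by
    intro t ht
    have h1 := hcos t ht
    have h2 := hsin t ht
    rw [hγe t, hFdef]
    simp only
    congr 1
    funext i
    fin_cases i
    · simp only [Fin.zero_eta, Matrix.cons_val_zero]
      rw [h1, h2, hudef, hvdef]
      simp only
      rw [hA']
      field_simp
      try ring
    · simp only [Fin.mk_one, Matrix.cons_val_one, Matrix.head_cons]
      rw [h2, hvdef]
      simp only
      field_simp
  -- derivative of F
  have hFd' : ∀ θ, HasDerivAt F (Fd θ) θ := by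
    intro θ
    have h1 : HasDerivAt (fun θ : ℝ => (![Real.cos θ * (1/sa) - Real.sin θ * (B/(2*A*s)),
        Real.sin θ * (1/s)] : Fin 2 → ℝ))
        (![-(Real.sin θ) * (1/sa) - Real.cos θ * (B/(2*A*s)), Real.cos θ * (1/s)]) θ := by
      rw [hasDerivAt_pi]
      intro i
      fin_cases i
      · simpa [Pi.sub_def] using ((Real.hasDerivAt_cos θ).mul_const (1/sa)).sub
          ((Real.hasDerivAt_sin θ).mul_const (B/(2*A*s)))
      · simpa using (Real.hasDerivAt_sin θ).mul_const (1/s)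
    exact (e.toContinuousLinearMap.hasFDerivAt.comp_hasDerivAt θ h1 :)
  have hFdc : Continuous Fd := by
    rw [hFddef]
    apply e.continuous.comp
    apply continuous_pi
    intro i
    fin_cases i
    · show Continuous fun θ : ℝ => -(Real.sin θ) * (1/sa) - Real.cos θ * (B/(2*A*s))
      fun_prop
    · show Continuous fun θ : ℝ => Real.cos θ * (1/s)
      fun_prop
  have hnorm : ∀ θ, ‖Fd θ‖ = g θ := by
    intro θ
    rw [hFddef, hgdef]
    simp only
    rw [EuclideanSpace.norm_eq]
    congr 1
    rw [Fin.sum_univ_two]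
    simp only [hedef, PiLp.continuousLinearEquiv_symm_apply, PiLp.toLp_apply,
      Matrix.cons_val_zero, Matrix.cons_val_one, Matrix.head_cons,
      Real.norm_eq_abs, sq_abs]
    ring
  have hchord : ∀ a b : ℝ, a ≤ b → dist (F a) (F b) ≤ ∫ θ in a..b, g θ := by
    intro a b hab
    have hftc : ∫ θ in a..b, Fd θ = F b - F a :=
      intervalIntegral.integral_eq_sub_of_hasDerivAt (fun θ _ => hFd' θ)
        (hFdc.intervalIntegrable _ _)
    rw [dist_eq_norm', ← hftc]
    calc ‖∫ θ in a..b, Fd θ‖ ≤ ∫ θ in a..b, ‖Fd θ‖ :=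
          intervalIntegral.norm_integral_le_integral_norm hab
      _ = ∫ θ in a..b, g θ := by simp only [hnorm]
  -- the integral of g²
  have hABCs : (1/sa)^2 + (B/(2*A*s))^2 + (1/s)^2 = 4*(A+C)/(4*A*C-B^2) := by
    have e1 : (1/sa)^2 = 1/A := by rw [div_pow, one_pow, hsa2]
    have e2 : (1/s)^2 = (4*A)/(4*A*C-B^2) := by
      rw [div_pow, one_pow, hs2, one_div_div]
    have e3 : (B/(2*A*s))^2 = B^2/(A*(4*A*C-B^2)) := by
      rw [div_pow, mul_pow, mul_pow, hs2]
      rw [show ((2:ℝ)^2 = 4) by norm_num]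
      field_simp
    rw [e1, e2, e3]
    have hD0 : 4*A*C-B^2 ≠ 0 := hD.ne'
    rw [div_add_div _ _ hA.ne' (mul_ne_zero hA.ne' hD0),
      div_add_div _ _ (mul_ne_zero hA.ne' (mul_ne_zero hA.ne' hD0)) hD0,
      div_eq_div_iff (mul_ne_zero (mul_ne_zero hA.ne' (mul_ne_zero hA.ne' hD0)) hD0) hD0]
    ring
  have hg2int : ∫ θ in (0:ℝ)..(2*π), (g θ)^2 = π * (4*(A+C)/(4*A*C-B^2)) := by
    have hev : ∀ θ, (g θ)^2 = (1/sa)^2 * Real.sin θ^2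
        + (2*(1/sa)*(B/(2*A*s))) * (Real.sin θ * Real.cos θ)
        + ((B/(2*A*s))^2 + (1/s)^2) * Real.cos θ^2 := by
      intro θ
      rw [hgdef]
      simp only
      rw [Real.sq_sqrt (by positivity)]
      ring
    simp only [hev]
    rw [intervalIntegral.integral_add (by apply Continuous.intervalIntegrable; fun_prop)
        (by apply Continuous.intervalIntegrable; fun_prop),
      intervalIntegral.integral_add (by apply Continuous.intervalIntegrable; fun_prop)
        (by apply Continuous.intervalIntegrable; fun_prop),
      intervalIntegral.integral_const_mul, intervalIntegral.integral_const_mul,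
      intervalIntegral.integral_const_mul, integral_sin_sq, integral_cos_sq,
      integral_sin_mul_cos₁]
    simp only [Real.sin_two_pi, Real.cos_two_pi, Real.sin_zero, Real.cos_zero]
    ring_nf
    linear_combination π * hABCs
  set K := Real.sqrt (2*(A+C)) / Real.sqrt (4*A*C-B^2) with hKdef
  have hK0 : 0 < K := div_pos (Real.sqrt_pos.2 (by linarith)) (Real.sqrt_pos.2 hD)
  have hK2 : K^2 = 2*(A+C)/(4*A*C-B^2) := by
    rw [hKdef, div_pow, Real.sq_sqrt (by linarith), Real.sq_sqrt hD.le]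
  have hgint_le : ∫ θ in (0:ℝ)..(2*π), g θ ≤ 2*π*K := by
    have h1 : ∫ θ in (0:ℝ)..(2*π), g θ ≤ ∫ θ in (0:ℝ)..(2*π), ((g θ)^2 + K^2)/(2*K) := by
      apply intervalIntegral.integral_mono_on (by positivity)
        (hgc.intervalIntegrable _ _)
        (by apply Continuous.intervalIntegrable; fun_prop)
      intro θ _
      rw [le_div_iff₀ (by positivity)]
      nlinarith [sq_nonneg (g θ - K)]
    have h2 : ∫ θ in (0:ℝ)..(2*π), ((g θ)^2 + K^2)/(2*K)
        = ((∫ θ in (0:ℝ)..(2*π), (g θ)^2) + 2*π*K^2)/(2*K) := by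
      rw [intervalIntegral.integral_div, intervalIntegral.integral_add
        (by apply Continuous.intervalIntegrable; fun_prop) intervalIntegrable_const,
        intervalIntegral.integral_const]
      simp only [smul_eq_mul, sub_zero]
    have h3 : π * (4*(A+C)/(4*A*C-B^2)) = 2*π*K^2 := by rw [hK2]; ring
    calc ∫ θ in (0:ℝ)..(2*π), g θ ≤ _ := h1
      _ = ((∫ θ in (0:ℝ)..(2*π), (g θ)^2) + 2*π*K^2)/(2*K) := h2
      _ = (2*π*K^2 + 2*π*K^2)/(2*K) := by rw [hg2int, h3]
      _ = 2*π*K := by field_simp; ring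
  -- basic membership facts
  have hI0 : (0:ℝ) ∈ Set.Icc (0:ℝ) 1 := by norm_num
  have hI1 : (1:ℝ) ∈ Set.Icc (0:ℝ) 1 := by norm_num
  have hIhalf : (1/2:ℝ) ∈ Set.Icc (0:ℝ) 1 := by norm_num
  have h10 : γ 1 = γ 0 := by
    have := hper 0
    rwa [zero_add] at this
  have hγinj : ∀ a ∈ Set.Icc (0:ℝ) 1, ∀ b ∈ Set.Icc (0:ℝ) 1, φ a = φ b → γ a = γ b := by
    intro a ha b hb h
    rw [hγF a ha, hγF b hb, h]
  -- φ 1 ≠ φ 0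
  have hφ01 : φ 1 ≠ φ 0 := by
    intro h01
    have hm0 : φ (1/2) ≠ φ 0 := by
      intro h
      have h2 : (1/2:ℝ) = 0 := hinj ⟨by norm_num, by norm_num⟩ ⟨le_refl 0, zero_lt_one⟩
        (hγinj _ hIhalf _ hI0 h)
      norm_num at h2
    set c := (φ 0 + φ (1/2))/2 with hcdef
    have hc0 : c ≠ φ 0 := fun h => hm0 (by rw [hcdef] at h; linarith)
    have hchalf : c ≠ φ (1/2) := fun h => hm0 (by rw [hcdef] at h; linarith)
    have hfinish : ∀ x ∈ Set.Icc (0:ℝ) (1/2), ∀ y ∈ Set.Icc (1/2:ℝ) 1,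
        φ x = c → φ y = c → False := by
      intro x hxI y hyI hxc hyc
      have hxI' : x ∈ Set.Icc (0:ℝ) 1 := ⟨hxI.1, hxI.2.trans (by norm_num)⟩
      have hyI' : y ∈ Set.Icc (0:ℝ) 1 := ⟨le_trans (by norm_num) hyI.1, hyI.2⟩
      have hxhalf : x ≠ 1/2 := fun h => hchalf (by rw [← h, hxc])
      have hxy : x < y := lt_of_lt_of_le (lt_of_le_of_ne hxI.2 hxhalf) hyI.1
      have hγxy : γ x = γ y := hγinj x hxI' y hyI' (by rw [hxc, hyc])
      rcases eq_or_lt_of_le hyI'.2 with hy1 | hy1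
      · have hγx : γ x = γ 0 := by rw [hγxy, hy1, h10]
        have hx0 : x = 0 := hinj ⟨hxI'.1, lt_of_le_of_lt hxI.2 (by norm_num)⟩
          ⟨le_refl 0, zero_lt_one⟩ hγx
        rw [hx0] at hxc
        exact hc0 hxc.symm
      · have := hinj ⟨hxI'.1, hxy.trans hy1⟩ ⟨hyI'.1, hy1⟩ hγxy
        exact absurd this hxy.ne
    rcases hm0.lt_or_gt with h | h
    · have hmem1 : c ∈ Set.Icc (φ (1/2)) (φ 0) := ⟨by rw [hcdef]; linarith, by rw [hcdef]; linarith⟩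
      obtain ⟨x, hxI, hxc⟩ := intermediate_value_Icc' (by norm_num : (0:ℝ) ≤ 1/2)
        (hφc.mono (Set.Icc_subset_Icc (le_refl 0) (by norm_num))) hmem1
      have hmem2 : c ∈ Set.Icc (φ (1/2)) (φ 1) := by rw [h01]; exact hmem1
      obtain ⟨y, hyI, hyc⟩ := intermediate_value_Icc (by norm_num : (1/2:ℝ) ≤ 1)
        (hφc.mono (Set.Icc_subset_Icc (by norm_num) (le_refl 1))) hmem2
      exact hfinish x hxI y hyI hxc hyc
    · have hmem1 : c ∈ Set.Icc (φ 0) (φ (1/2)) := ⟨by rw [hcdef]; linarith, by rw [hcdef]; linarith⟩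
      obtain ⟨x, hxI, hxc⟩ := intermediate_value_Icc (by norm_num : (0:ℝ) ≤ 1/2)
        (hφc.mono (Set.Icc_subset_Icc (le_refl 0) (by norm_num))) hmem1
      have hmem2 : c ∈ Set.Icc (φ 1) (φ (1/2)) := by rw [h01]; exact hmem1
      obtain ⟨y, hyI, hyc⟩ := intermediate_value_Icc' (by norm_num : (1/2:ℝ) ≤ 1)
        (hφc.mono (Set.Icc_subset_Icc (by norm_num) (le_refl 1))) hmem2
      exact hfinish x hxI y hyI hxc hyc
  -- φ is injective on [0,1]
  have hφinj : Set.InjOn φ (Set.Icc 0 1) := by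
    have hkey : ∀ a ∈ Set.Icc (0:ℝ) 1, ∀ b ∈ Set.Icc (0:ℝ) 1, a < b → φ a = φ b → False := by
      intro a ha b hb hlt heq
      have hγab : γ a = γ b := hγinj a ha b hb heq
      rcases eq_or_lt_of_le hb.2 with hb1 | hb1
      · rcases eq_or_lt_of_le ha.1 with ha0 | ha0
        · exact hφ01 (by rw [← hb1, ← heq, ← ha0])
        · have hγa : γ a = γ 0 := by rw [hγab, hb1, h10]
          have : a = 0 := hinj ⟨ha.1, lt_of_lt_of_le hlt hb.2⟩ ⟨le_refl 0, zero_lt_one⟩ hγa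
          exact absurd this.symm ha0.ne
      · have : a = b := hinj ⟨ha.1, hlt.trans hb1⟩ ⟨hb.1, hb1⟩ hγab
        exact absurd this hlt.ne
    intro a ha b hb hab
    by_contra hne
    rcases Ne.lt_or_gt hne with h | h
    · exact hkey a ha b hb h hab
    · exact hkey b hb a ha h hab.symm
  have hmonoanti := hφc.strictMonoOn_of_injOn_Icc' zero_le_one hφinj
  -- the main bound for any partition
  have hbound : ∀ ξ : ℕ → ℝ, Monotone ξ → (∀ i, ξ i ∈ Set.Icc (0:ℝ) 1) → ∀ n : ℕ,
      ∑ i ∈ Finset.range n, dist (γ (ξ i)) (γ (ξ (i+1))) ≤ 2*π*K := by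
    intro ξ hξ hξm n
    have hrw : ∀ i : ℕ, γ (ξ i) = F (φ (ξ i)) := fun i => hγF _ (hξm i)
    rcases hmonoanti with hmono | hanti
    · -- monotone case
      have hφ1le : φ 1 ≤ φ 0 + 2*π := by
        by_contra hgt
        push_neg at hgt
        have hcm : φ 0 + 2*π ∈ Set.Icc (φ 0) (φ 1) := ⟨by linarith, by linarith⟩
        obtain ⟨t, htI, htc⟩ := intermediate_value_Icc zero_le_one hφc hcm
        have ht1 : t ≠ 1 := by
          intro h
          rw [h] at htc
          linarith
        have hγt : γ t = γ 0 := by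
          rw [hγF t htI, htc, hγF 0 hI0, hFper (φ 0)]
        have ht0 : t = 0 := hinj ⟨htI.1, lt_of_le_of_ne htI.2 ht1⟩
          ⟨le_refl 0, zero_lt_one⟩ hγt
        rw [ht0] at htc
        linarith
      set ψ : ℕ → ℝ := fun i => φ (ξ i) with hψdef
      have hψm : Monotone ψ := fun i j hij =>
        hmono.monotoneOn (hξm i) (hξm j) (hξ hij)
      have hsum := sum_dist_le F g hgc hchord ψ hψm n
      have hψn : ψ n ≤ ψ 0 + 2*π := by
        have h1 : ψ n ≤ φ 1 := hmono.monotoneOn (hξm n) hI1 (hξm n).2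
        have h2 : φ 0 ≤ ψ 0 := hmono.monotoneOn hI0 (hξm 0) (hξm 0).1
        linarith
      calc ∑ i ∈ Finset.range n, dist (γ (ξ i)) (γ (ξ (i+1)))
          = ∑ i ∈ Finset.range n, dist (F (ψ i)) (F (ψ (i+1))) := by
            apply Finset.sum_congr rfl
            intro i _
            rw [hrw i, hrw (i+1)]
        _ ≤ ∫ θ in (ψ 0)..(ψ n), g θ := hsum
        _ ≤ ∫ θ in (ψ 0)..(ψ 0 + 2*π), g θ := by
            rw [← intervalIntegral.integral_add_adjacent_intervals (a := ψ 0) (b := ψ n)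
              (c := ψ 0 + 2*π) (hgc.intervalIntegrable _ _) (hgc.intervalIntegrable _ _)]
            have hnn : 0 ≤ ∫ θ in (ψ n)..(ψ 0 + 2*π), g θ :=
              intervalIntegral.integral_nonneg hψn (fun θ _ => hgnn θ)
            linarith
        _ = ∫ θ in (0:ℝ)..(2*π), g θ := by
            have := hgper.intervalIntegral_add_eq (ψ 0) 0
            rwa [zero_add] at this
        _ ≤ 2*π*K := hgint_le
    · -- antitone case
      have hφ0le : φ 0 ≤ φ 1 + 2*π := by
        by_contra hgt
        push_neg at hgt
        have hcm : φ 1 + 2*π ∈ Set.Icc (φ 1) (φ 0) := ⟨by linarith, by linarith⟩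
        obtain ⟨t, htI, htc⟩ := intermediate_value_Icc' zero_le_one hφc hcm
        have ht0 : t ≠ 0 := by
          intro h
          rw [h] at htc
          linarith
        have ht1 : t ≠ 1 := by
          intro h
          rw [h] at htc
          linarith
        have hγt : γ t = γ 0 := by
          rw [hγF t htI, htc, ← h10, hγF 1 hI1, hFper (φ 1)]
        have : t = 0 := hinj ⟨htI.1, lt_of_le_of_ne htI.2 ht1⟩
          ⟨le_refl 0, zero_lt_one⟩ hγt
        exact ht0 this
      set ψ : ℕ → ℝ := fun i => φ (ξ i) with hψdef
      have hψm : Monotone (fun i => -ψ i) := fun i j hij =>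
        neg_le_neg (hanti.antitoneOn (hξm i) (hξm j) (hξ hij))
      have hchord' : ∀ a b : ℝ, a ≤ b →
          dist (F (-a)) (F (-b)) ≤ ∫ θ in a..b, g (-θ) := by
        intro a b hab
        rw [dist_comm]
        calc dist (F (-b)) (F (-a)) ≤ ∫ θ in (-b)..(-a), g θ :=
              hchord _ _ (neg_le_neg hab)
          _ = ∫ θ in a..b, g (-θ) :=
              (intervalIntegral.integral_comp_neg (a := a) (b := b) (f := g)).symm
      have hsum := sum_dist_le (fun θ => F (-θ)) (fun θ => g (-θ))
        (hgc.comp continuous_neg) hchord' (fun i => -ψ i) hψm n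
      simp only [neg_neg] at hsum
      have hψ0 : ψ 0 ≤ ψ n + 2*π := by
        have h1 : ψ 0 ≤ φ 0 := hanti.antitoneOn hI0 (hξm 0) (hξm 0).1
        have h2 : φ 1 ≤ ψ n := hanti.antitoneOn (hξm n) hI1 (hξm n).2
        linarith
      calc ∑ i ∈ Finset.range n, dist (γ (ξ i)) (γ (ξ (i+1)))
          = ∑ i ∈ Finset.range n, dist (F (ψ i)) (F (ψ (i+1))) := by
            apply Finset.sum_congr rfl
            intro i _
            rw [hrw i, hrw (i+1)]
        _ ≤ ∫ θ in (-ψ 0)..(-ψ n), g (-θ) := hsum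
        _ = ∫ θ in (ψ n)..(ψ 0), g θ := by
            rw [intervalIntegral.integral_comp_neg (a := -ψ 0) (b := -ψ n) (f := g),
              neg_neg, neg_neg]
        _ ≤ ∫ θ in (ψ n)..(ψ n + 2*π), g θ := by
            rw [← intervalIntegral.integral_add_adjacent_intervals (a := ψ n) (b := ψ 0)
              (c := ψ n + 2*π) (hgc.intervalIntegrable _ _) (hgc.intervalIntegrable _ _)]
            have hnn : 0 ≤ ∫ θ in (ψ 0)..(ψ n + 2*π), g θ :=
              intervalIntegral.integral_nonneg hψ0 (fun θ _ => hgnn θ)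
            linarith
        _ = ∫ θ in (0:ℝ)..(2*π), g θ := by
            have := hgper.intervalIntegral_add_eq (ψ n) 0
            rwa [zero_add] at this
        _ ≤ 2*π*K := hgint_le
  -- conclusion
  have hR : Real.sqrt (2*(A+C)) * (2*π/Real.sqrt (4*A*C-B^2)) = 2*π*K := by
    rw [hKdef]
    ring
  unfold eVariationOn
  apply iSup_le
  rintro ⟨n, ξ, hξ, hξm⟩
  simp only
  calc ∑ i ∈ Finset.range n, edist (γ (ξ (i+1))) (γ (ξ i))
      = ENNReal.ofReal (∑ i ∈ Finset.range n, dist (γ (ξ i)) (γ (ξ (i+1)))) := by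
        rw [ENNReal.ofReal_sum_of_nonneg (fun i _ => dist_nonneg)]
        apply Finset.sum_congr rfl
        intro i _
        rw [edist_dist, dist_comm]
    _ ≤ ENNReal.ofReal (Real.sqrt (2*(A+C)) * (2*π/Real.sqrt (4*A*C-B^2))) := by
        apply ENNReal.ofReal_le_ofReal
        rw [hR]
        exact hbound ξ hξ hξm n
  done
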